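/- Let M be a homogeneous, monotone, and repetition invariant mean on (0,∞). Then the sequence dₙ := M(n/1, n/2, …, n/n) is nearly increasing with constant ε = 1/2, i.e., dₘ ≤ 2·dₙ for all m ≤ n. -/
import Mathlib


/-- `M` is a mean on the set `I`: its value on every nonempty tuple from `I`
lies between the minimum and the maximum of the tuple. -/
def IsMeanOn (I : Set ℝ) (M : ∀ n : ℕ, (Fin n → ℝ) → ℝ) : Prop :=
  ∀ (n : ℕ) (a : Fin (n + 1) → ℝ), (∀ i, a i ∈ I) →
    (⨅ i, a i) ≤ M (n + 1) a ∧ M (n + 1) a ≤ ⨆ i, a i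

/-- `M` is (positively) homogeneous. -/
def IsHomogeneousMean (M : ∀ n : ℕ, (Fin n → ℝ) → ℝ) : Prop :=
  ∀ (t : ℝ), 0 < t → ∀ (n : ℕ) (a : Fin n → ℝ), (∀ i, 0 < a i) →
    M n (fun i => t * a i) = t * M n a

/-- `M` is monotone (nondecreasing in each variable). -/
def IsMonotoneMean (M : ∀ n : ℕ, (Fin n → ℝ) → ℝ) : Prop :=
  ∀ (n : ℕ) (a b : Fin n → ℝ), (∀ i, 0 < a i) → (∀ i, a i ≤ b i) →
    M n a ≤ M n b

/-- `M` is repetition invariant: repeating every entry `m` times does not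
change the value of the mean. -/
def IsRepetitionInvariant (M : ∀ n : ℕ, (Fin n → ℝ) → ℝ) : Prop :=
  ∀ (n m : ℕ), 0 < m → ∀ (a : Fin n → ℝ), (∀ i, 0 < a i) →
    M (n * m) (fun i => a ⟨(i : ℕ) / m, Nat.div_lt_of_lt_mul
      (lt_of_lt_of_eq i.isLt (Nat.mul_comm n m))⟩) = M n a

/-- `M` is a weak-Hardy mean on `I`: for every summable sequence in `I` the
sequence of running means is summable. -/
def IsWeakHardyMean (I : Set ℝ) (M : ∀ n : ℕ, (Fin n → ℝ) → ℝ) : Prop :=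
  ∀ a : ℕ → ℝ, (∀ n, a n ∈ I) → Summable a →
    Summable (fun n => M (n + 1) (fun k : Fin (n + 1) => a (k : ℕ)))

theorem stmt_4 (M : ∀ n : ℕ, (Fin n → ℝ) → ℝ)
    (hmean : IsMeanOn (Set.Ioi 0) M)
    (hhom : IsHomogeneousMean M) (hmono : IsMonotoneMean M)
    (hrep : IsRepetitionInvariant M)
    (d : ℕ → ℝ) (hd : ∀ n, d n = M n (fun k : Fin n => (n : ℝ) / ((k : ℕ) + 1)))
    (m n : ℕ) (hm : 0 < m) (hmn : m ≤ n) :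
    d m ≤ 2 * d n := by
  have hn : 0 < n := lt_of_lt_of_le hm hmn
  have hmR : (0:ℝ) < m := by exact_mod_cast hm
  have hnR : (0:ℝ) < n := by exact_mod_cast hn
  have h1 := hrep m n hn (fun k : Fin m => (m : ℝ) / ((k : ℕ) + 1))
    (fun k => div_pos hmR (by positivity))
  have h2 := hrep n m hm (fun k : Fin n => (n : ℝ) / ((k : ℕ) + 1))
    (fun k => div_pos hnR (by positivity))
  simp only [Fin.val_mk] at h1 h2
  rw [Nat.mul_comm n m] at h2
  -- key pointwise inequality
  have key : ∀ i : ℕ, (m : ℝ) / ((i / n : ℕ) + 1) ≤ 2 * ((n : ℝ) / ((i / m : ℕ) + 1)) := by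
    intro i
    have hA : m * (i / m + 1) ≤ i + n := by
      have h := Nat.div_mul_le_self i m
      calc m * (i / m + 1) = i / m * m + m := by ring
        _ ≤ i + m := by omega
        _ ≤ i + n := by omega
    have hB : i + n + 1 ≤ 2 * (n * (i / n + 1)) := by
      have h1' : i < (i / n + 1) * n := (Nat.div_lt_iff_lt_mul hn).mp (Nat.lt_succ_self _)
      have h2' : n ≤ n * (i / n + 1) := Nat.le_mul_of_pos_right n (Nat.succ_pos _)
      have h3' : (i / n + 1) * n = n * (i / n + 1) := Nat.mul_comm _ _
      omega
    have hnat : m * (i / m + 1) ≤ 2 * n * (i / n + 1) := by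
      calc m * (i / m + 1) ≤ i + n := hA
        _ ≤ 2 * (n * (i / n + 1)) := by omega
        _ = 2 * n * (i / n + 1) := by ring
    have hx : (0:ℝ) < ((i / n : ℕ) : ℝ) + 1 := by positivity
    have hy : (0:ℝ) < ((i / m : ℕ) : ℝ) + 1 := by positivity
    rw [← mul_div_assoc, div_le_div_iff₀ hx hy]
    calc (m:ℝ) * (((i / m : ℕ):ℝ) + 1) = ((m * (i / m + 1) : ℕ) : ℝ) := by push_cast; ring
      _ ≤ ((2 * n * (i / n + 1) : ℕ) : ℝ) := by exact_mod_cast hnat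
      _ = 2 * (n:ℝ) * (((i / n : ℕ):ℝ) + 1) := by push_cast; ring
  have hstep : M (m * n) (fun i : Fin (m * n) => (m : ℝ) / (((i : ℕ) / n : ℕ) + 1))
      ≤ M (m * n) (fun i : Fin (m * n) => 2 * ((n : ℝ) / (((i : ℕ) / m : ℕ) + 1))) :=
    hmono (m * n) _ _ (fun i => div_pos hmR (by positivity)) (fun i => key i)
  have hhom2 := hhom 2 two_pos (m * n) (fun i : Fin (m * n) => (n : ℝ) / (((i : ℕ) / m : ℕ) + 1))
    (fun i => div_pos hnR (by positivity))
  calc d m = M (m * n) (fun i : Fin (m * n) => (m : ℝ) / (((i : ℕ) / n : ℕ) + 1)) := by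
        rw [hd m]; exact h1.symm
    _ ≤ M (m * n) (fun i : Fin (m * n) => 2 * ((n : ℝ) / (((i : ℕ) / m : ℕ) + 1))) := hstep
    _ = 2 * M (m * n) (fun i : Fin (m * n) => (n : ℝ) / (((i : ℕ) / m : ℕ) + 1)) := hhom2
    _ = 2 * d n := by rw [h2, hd n]
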